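/- For all ε with 0 < ε ≤ 2 and all θ₀ with 0 < θ₀ ≤ π/2, if r ≥ log(2/sin θ₀) + log(1/ε) + 1, then 2r ≥ arccosh((1 + cosh ε)/(sinh²(ε/2) sin²θ₀) − 1). -/

import Mathlib

open Real

noncomputable def arcosh (x : ℝ) : ℝ := Real.log (x + Real.sqrt (x ^ 2 - 1))

lemma key_tanh (t : ℝ) (ht0 : 0 < t) (ht : t ≤ 1) :
    2 * t * Real.cosh t ≤ Real.exp 1 * Real.sinh t := by
  have hb1 := Real.exp_bound (x := t) (by rw [abs_of_pos ht0]; exact ht) (n := 5) (by norm_num)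
  have hb2 := Real.exp_bound (x := -t) (by rw [abs_neg, abs_of_pos ht0]; exact ht) (n := 5) (by norm_num)
  have he : (2.7182818283 : ℝ) < Real.exp 1 := Real.exp_one_gt_d9
  rw [abs_of_pos ht0] at hb1
  rw [abs_neg, abs_of_pos ht0] at hb2
  simp only [Finset.sum_range_succ, Finset.sum_range_zero, Nat.factorial] at hb1 hb2
  norm_num at hb1 hb2
  rw [abs_le] at hb1 hb2
  obtain ⟨h1l, h1r⟩ := hb1
  obtain ⟨h2l, h2r⟩ := hb2
  have ht2 : t^2 ≤ 1 := pow_le_one₀ ht0.le ht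
  have ht4 : t^4 ≤ 1 := pow_le_one₀ ht0.le ht
  have ht5 : t^5 ≤ 1 := pow_le_one₀ ht0.le ht
  have hA : 2*t + t^3/3 - t^5/50 ≤ Real.exp t - Real.exp (-t) := by nlinarith
  have hB : Real.exp t + Real.exp (-t) ≤ 2 + t^2 + t^4/12 + t^5/50 := by nlinarith
  have hpos : (0:ℝ) ≤ 2*t + t^3/3 - t^5/50 := by nlinarith [pow_le_pow_of_le_one ht0.le ht (by norm_num : (3:ℕ) ≤ 5)]
  have hstep : (2.7182818283:ℝ) * (2*t + t^3/3 - t^5/50) ≤ Real.exp 1 * (Real.exp t - Real.exp (-t)) := by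
    calc (2.7182818283:ℝ) * (2*t + t^3/3 - t^5/50) ≤ Real.exp 1 * (2*t + t^3/3 - t^5/50) :=
          mul_le_mul_of_nonneg_right he.le hpos
      _ ≤ Real.exp 1 * (Real.exp t - Real.exp (-t)) :=
          mul_le_mul_of_nonneg_left hA (Real.exp_pos 1).le
  have hfinal : 2 * t * (2 + t^2 + t^4/12 + t^5/50) ≤ (2.7182818283:ℝ) * (2*t + t^3/3 - t^5/50) := by
    nlinarith [mul_le_of_le_one_right ht0.le ht2, mul_le_of_le_one_right ht0.le ht4,
      mul_le_of_le_one_right ht0.le ht5, mul_pos ht0 ht0]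
  rw [Real.cosh_eq, Real.sinh_eq]
  nlinarith [mul_le_mul_of_nonneg_left hB (by linarith : (0:ℝ) ≤ 2 * t)]

theorem two_r_ge_arcosh (ε θ₀ r : ℝ) (hε0 : 0 < ε) (hε : ε ≤ 2) (hθ0 : 0 < θ₀) (hθ : θ₀ ≤ π / 2)
    (hr : Real.log (2 / Real.sin θ₀) + Real.log (1 / ε) + 1 ≤ r) :
    2 * r ≥ _root_.arcosh ((1 + Real.cosh ε) / (Real.sinh (ε / 2) ^ 2 * Real.sin θ₀ ^ 2) - 1) := by
  set s := Real.sin θ₀ with hs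
  have hs0 : 0 < s := Real.sin_pos_of_pos_of_lt_pi hθ0 (lt_of_le_of_lt hθ (by linarith [Real.pi_pos]))
  have hs1 : s ≤ 1 := Real.sin_le_one θ₀
  set t := ε / 2 with htdef
  have ht0 : 0 < t := by positivity
  have ht1 : t ≤ 1 := by simp only [htdef]; linarith
  have hsh : 0 < Real.sinh t := Real.sinh_pos_iff.2 ht0
  have hch : 0 < Real.cosh t := Real.cosh_pos t
  have hchsq : Real.cosh t ^ 2 = Real.sinh t ^ 2 + 1 := Real.cosh_sq t
  have h1c : 1 + Real.cosh ε = 2 * Real.cosh t ^ 2 := by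
    have hct : Real.cosh ε = 2 * Real.cosh t ^ 2 - 1 := by
      rw [show ε = 2 * t by rw [htdef]; ring, Real.cosh_two_mul]; linarith
    linarith
  set x := (1 + Real.cosh ε) / (Real.sinh (ε/2) ^ 2 * s ^ 2) - 1 with hxdef
  have hden : 0 < Real.sinh t ^ 2 * s ^ 2 := by positivity
  have hxA : x = 2 * Real.cosh t ^ 2 / (Real.sinh t ^ 2 * s ^ 2) - 1 := by
    rw [hxdef, h1c]
  have hx1 : 1 ≤ x := by
    rw [hxA, le_sub_iff_add_le, le_div_iff₀ hden]
    nlinarith [mul_le_of_le_one_right (sq_nonneg (Real.sinh t)) (pow_le_one₀ hs0.le hs1 : s^2 ≤ 1)]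
  have hx0 : 0 < x := by linarith
  -- arcosh x ≤ log (2x)
  have hsqrt : Real.sqrt (x ^ 2 - 1) ≤ x := by
    calc Real.sqrt (x ^ 2 - 1) ≤ Real.sqrt (x ^ 2) := Real.sqrt_le_sqrt (by linarith)
      _ = x := by rw [Real.sqrt_sq hx0.le]
  have harc : _root_.arcosh x ≤ Real.log (2 * x) := by
    unfold _root_.arcosh
    apply Real.log_le_log (by positivity)
    linarith
  -- log (2x) ≤ log ((2 cosh t / (sinh t * s))^2)
  set y := 2 * Real.cosh t / (Real.sinh t * s) with hydef
  have hy0 : 0 < y := by positivity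
  have h2x : 2 * x ≤ y ^ 2 := by
    have hy2 : y ^ 2 = 4 * Real.cosh t ^ 2 / (Real.sinh t ^ 2 * s ^ 2) := by
      rw [hydef]; field_simp; ring
    rw [hxA, hy2]
    have e1 : 2 * (2 * Real.cosh t ^ 2 / (Real.sinh t ^ 2 * s ^ 2) - 1) =
        4 * Real.cosh t ^ 2 / (Real.sinh t ^ 2 * s ^ 2) - 2 := by ring
    rw [e1]; linarith
  have hlog2 : Real.log (2 * x) ≤ Real.log (y ^ 2) := Real.log_le_log (by positivity) h2x
  have hlogy : Real.log (y ^ 2) = 2 * Real.log y := by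
    rw [Real.log_pow]; push_cast; ring
  -- y ≤ exp r
  have hkey : 2 * t * Real.cosh t ≤ Real.exp 1 * Real.sinh t := key_tanh t ht0 ht1
  have hexpr : 2 / s * (1 / ε) * Real.exp 1 ≤ Real.exp r := by
    have h1 : Real.exp (Real.log (2/s) + Real.log (1/ε) + 1) ≤ Real.exp r := Real.exp_le_exp.2 hr
    rwa [Real.exp_add, Real.exp_add, Real.exp_log (by positivity), Real.exp_log (by positivity)] at h1
  have hyexp : y ≤ Real.exp r := by
    have hyle : y ≤ 2 / s * (1 / ε) * Real.exp 1 := by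
      rw [hydef, div_le_iff₀ (by positivity)]
      have hε2t : ε = 2 * t := by rw [htdef]; ring
      rw [hε2t]
      have hR : 2 / s * (1 / (2*t)) * Real.exp 1 * (Real.sinh t * s) = Real.exp 1 * Real.sinh t / t := by
        field_simp
      rw [hR, le_div_iff₀ ht0]
      nlinarith [hkey]
    linarith
  have hlogr : Real.log y ≤ r := by
    rw [← Real.log_exp r]
    exact Real.log_le_log hy0 hyexp
  calc _root_.arcosh x ≤ Real.log (2 * x) := harc
    _ ≤ Real.log (y ^ 2) := hlog2
    _ = 2 * Real.log y := hlogy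
    _ ≤ 2 * r := by linarith
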